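/- Let v ~ N(p₀, σv²), u ~ N(0, σu²), ε ~ N(0, σε²) be independent Gaussian random variables, with σv, σu > 0 and σε ≥ 0. Set x = β(v − p₀) with β = √(σu² + σε²)/σv, ỹ = x + u + ε, and p = p₀ + λ·ỹ with λ = σv/(2√(σu² + σε²)). Then E[(v − p)·x] = (1/2)·σv·√(σu² + σε²). -/

import Mathlib

open MeasureTheory ProbabilityTheory Real Filter
open scoped NNReal ENNReal

section KyleAux

lemma gauss_int1 {b : ℝ} (hb : 0 < b) : ∫ x : ℝ, x * rexp (-b * x ^ 2) = 0 := by
  have hderiv : ∀ x : ℝ, HasDerivAt (fun y : ℝ => -(2*b)⁻¹ * rexp (-b * y ^ 2))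
      (x * rexp (-b * x ^ 2)) x := by
    intro x
    refine (((hasDerivAt_pow 2 x).const_mul (-b)).exp.const_mul (-(2*b)⁻¹)).congr_deriv ?_
    field_simp
    ring
  have h1 : Integrable (fun x : ℝ => x * rexp (-b * x ^ 2)) := integrable_mul_exp_neg_mul_sq hb
  have h2 : Integrable (fun x : ℝ => -(2*b)⁻¹ * rexp (-b * x ^ 2)) :=
    (integrable_exp_neg_mul_sq hb).const_mul _
  exact integral_eq_zero_of_hasDerivAt_of_integrable hderiv h1 h2

lemma gauss_int_sq_integrable {b : ℝ} (hb : 0 < b) :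
    Integrable (fun x : ℝ => x ^ 2 * rexp (-b * x ^ 2)) := by
  have := integrable_rpow_mul_exp_neg_mul_sq hb (s := 2) (by norm_num)
  convert this using 2 with x
  rw [← Real.rpow_natCast x 2]
  norm_num

lemma gauss_int2 {b : ℝ} (hb : 0 < b) :
    ∫ x : ℝ, x ^ 2 * rexp (-b * x ^ 2) = (2*b)⁻¹ * √(π/b) := by
  have hderiv : ∀ x : ℝ, HasDerivAt (fun y : ℝ => (2*b)⁻¹ * (y * rexp (-b * y ^ 2)))
      ((2*b)⁻¹ * rexp (-b * x ^ 2) - x ^ 2 * rexp (-b * x ^ 2)) x := by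
    intro x
    have h1 : HasDerivAt (fun y : ℝ => rexp (-b * y ^ 2)) (rexp (-b * x^2) * (-b * (2*x))) x := by
      simpa using ((hasDerivAt_pow 2 x).const_mul (-b)).exp
    have := ((hasDerivAt_id x).mul h1).const_mul ((2*b)⁻¹)
    refine this.congr_deriv ?_
    simp only [id_eq]
    field_simp
    ring
  have hint : Integrable (fun x : ℝ => (2*b)⁻¹ * rexp (-b * x ^ 2) - x ^ 2 * rexp (-b * x ^ 2)) :=
    ((integrable_exp_neg_mul_sq hb).const_mul _).sub (gauss_int_sq_integrable hb)
  have hf : Integrable (fun x : ℝ => (2*b)⁻¹ * (x * rexp (-b * x ^ 2))) :=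
    (integrable_mul_exp_neg_mul_sq hb).const_mul _
  have h0 := integral_eq_zero_of_hasDerivAt_of_integrable hderiv hint hf
  rw [integral_sub ((integrable_exp_neg_mul_sq hb).const_mul _) (gauss_int_sq_integrable hb),
    integral_const_mul, integral_gaussian, sub_eq_zero] at h0
  linarith

open scoped NNReal ENNReal

lemma gaussianPDF_eq_coe_toNNReal (μ : ℝ) (v : ℝ≥0) :
    gaussianPDF μ v = fun x => ((Real.toNNReal (gaussianPDFReal μ v x) : ℝ≥0) : ℝ≥0∞) := rfl

lemma integral_fun_gaussianReal {μ : ℝ} {v : ℝ≥0} (hv : v ≠ 0) (g : ℝ → ℝ) :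
    ∫ x, g x ∂(gaussianReal μ v) = ∫ x, gaussianPDFReal μ v x * g x := by
  rw [gaussianReal_of_var_ne_zero _ hv, gaussianPDF_eq_coe_toNNReal,
    integral_withDensity_eq_integral_smul ((measurable_gaussianPDFReal _ _).real_toNNReal) g]
  congr 1 with x
  simp [NNReal.smul_def, Real.coe_toNNReal _ (gaussianPDFReal_nonneg μ v x)]

lemma integrable_fun_gaussianReal {μ : ℝ} {v : ℝ≥0} (hv : v ≠ 0) (g : ℝ → ℝ) :
    Integrable g (gaussianReal μ v) ↔
      Integrable (fun x => gaussianPDFReal μ v x * g x) volume := by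
  rw [gaussianReal_of_var_ne_zero _ hv, gaussianPDF_eq_coe_toNNReal,
    integrable_withDensity_iff_integrable_smul ((measurable_gaussianPDFReal _ _).real_toNNReal)]
  constructor <;> intro h <;> [skip; skip] <;>
  · refine h.congr (Filter.Eventually.of_forall fun x => ?_)
    simp [NNReal.smul_def, Real.coe_toNNReal _ (gaussianPDFReal_nonneg μ v x)]

lemma integrable_dirac_of_sm {f : ℝ → ℝ} (hf : StronglyMeasurable f) (a : ℝ) :
    Integrable f (Measure.dirac a) := by
  refine ⟨hf.aestronglyMeasurable, ?_⟩
  simp [HasFiniteIntegral, lintegral_dirac]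

lemma gaussianPDFReal_eq {μ : ℝ} {v : ℝ≥0} (x : ℝ) :
    gaussianPDFReal μ v x = (√(2 * π * v))⁻¹ * rexp (-(2*(v:ℝ))⁻¹ * (x - μ) ^ 2) := by
  rw [gaussianPDFReal]
  congr 1
  rw [neg_div]
  ring_nf

lemma sqrt_two_pi_v {v : ℝ≥0} (hv : v ≠ 0) :
    √(π / (2*(v:ℝ))⁻¹) = √(2 * π * v) := by
  have hv' : (0:ℝ) < v := by positivity
  congr 1
  field_simp

lemma integrable_sq_gaussianReal (μ : ℝ) (v : ℝ≥0) :
    Integrable (fun x => (x - μ) ^ 2) (gaussianReal μ v) := by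
  rcases eq_or_ne v 0 with rfl | hv
  · rw [gaussianReal_zero_var]
    exact integrable_dirac_of_sm (by measurability) μ
  have hv' : (0:ℝ) < v := by positivity
  have hb : (0:ℝ) < (2*(v:ℝ))⁻¹ := by positivity
  rw [integrable_fun_gaussianReal hv]
  have : Integrable (fun y : ℝ => (√(2 * π * v))⁻¹ * (y ^ 2 * rexp (-(2*(v:ℝ))⁻¹ * y ^ 2))) :=
    (gauss_int_sq_integrable hb).const_mul _
  have := this.comp_sub_right μ
  refine this.congr (Filter.Eventually.of_forall fun x => ?_)
  simp only [gaussianPDFReal_eq]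
  ring

lemma integral_sq_gaussianReal (μ : ℝ) (v : ℝ≥0) :
    ∫ x, (x - μ) ^ 2 ∂(gaussianReal μ v) = v := by
  rcases eq_or_ne v 0 with rfl | hv
  · rw [gaussianReal_zero_var, integral_dirac]
    simp
  have hv' : (0:ℝ) < v := by positivity
  have hb : (0:ℝ) < (2*(v:ℝ))⁻¹ := by positivity
  rw [integral_fun_gaussianReal hv]
  have h1 : ∀ x : ℝ, gaussianPDFReal μ v x * (x - μ) ^ 2
      = (√(2 * π * v))⁻¹ * ((x - μ) ^ 2 * rexp (-(2*(v:ℝ))⁻¹ * (x - μ) ^ 2)) := by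
    intro x; rw [gaussianPDFReal_eq]; ring
  simp_rw [h1]
  rw [integral_const_mul]
  rw [integral_sub_right_eq_self (fun y : ℝ => y ^ 2 * rexp (-(2*(v:ℝ))⁻¹ * y ^ 2)) μ]
  rw [gauss_int2 hb, sqrt_two_pi_v hv]
  have h2 : (0:ℝ) < √(2 * π * v) := by positivity
  field_simp

lemma integrable_id_gaussianReal (μ : ℝ) (v : ℝ≥0) :
    Integrable (fun x => x) (gaussianReal μ v) := by
  rcases eq_or_ne v 0 with rfl | hv
  · rw [gaussianReal_zero_var]
    exact integrable_dirac_of_sm (by measurability) μ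
  have hv' : (0:ℝ) < v := by positivity
  have hb : (0:ℝ) < (2*(v:ℝ))⁻¹ := by positivity
  rw [integrable_fun_gaussianReal hv]
  have : Integrable (fun y : ℝ => (√(2 * π * v))⁻¹ * ((y + μ) * rexp (-(2*(v:ℝ))⁻¹ * y ^ 2))) := by
    have h1 : Integrable (fun y : ℝ => y * rexp (-(2*(v:ℝ))⁻¹ * y ^ 2)) :=
      integrable_mul_exp_neg_mul_sq hb
    have h2 : Integrable (fun y : ℝ => μ * rexp (-(2*(v:ℝ))⁻¹ * y ^ 2)) :=
      (integrable_exp_neg_mul_sq hb).const_mul _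
    have h3 : Integrable (fun y : ℝ => y * rexp (-(2*(v:ℝ))⁻¹ * y ^ 2)
        + μ * rexp (-(2*(v:ℝ))⁻¹ * y ^ 2)) := h1.add h2
    refine (h3.const_mul ((√(2 * π * (v:ℝ)))⁻¹)).congr (Filter.Eventually.of_forall fun y => ?_)
    ring
  have := this.comp_sub_right μ
  refine this.congr (Filter.Eventually.of_forall fun x => ?_)
  simp only [gaussianPDFReal_eq]
  ring_nf

lemma integral_id_gaussianReal (μ : ℝ) (v : ℝ≥0) :
    ∫ x, x ∂(gaussianReal μ v) = μ := by
  rcases eq_or_ne v 0 with rfl | hv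
  · rw [gaussianReal_zero_var, integral_dirac]
  have hv' : (0:ℝ) < v := by positivity
  have hb : (0:ℝ) < (2*(v:ℝ))⁻¹ := by positivity
  rw [integral_fun_gaussianReal hv]
  have h1 : ∀ x : ℝ, gaussianPDFReal μ v x * x
      = (√(2 * π * v))⁻¹ * (((x - μ) + μ) * rexp (-(2*(v:ℝ))⁻¹ * (x - μ) ^ 2)) := by
    intro x; rw [gaussianPDFReal_eq]; ring_nf
  simp_rw [h1]
  rw [integral_const_mul]
  rw [integral_sub_right_eq_self (fun y : ℝ => (y + μ) * rexp (-(2*(v:ℝ))⁻¹ * y ^ 2)) μ]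
  have h1' : Integrable (fun y : ℝ => y * rexp (-(2*(v:ℝ))⁻¹ * y ^ 2)) :=
    integrable_mul_exp_neg_mul_sq hb
  have h2' : Integrable (fun y : ℝ => μ * rexp (-(2*(v:ℝ))⁻¹ * y ^ 2)) :=
    (integrable_exp_neg_mul_sq hb).const_mul _
  have hsplit : ∀ y : ℝ, (y + μ) * rexp (-(2*(v:ℝ))⁻¹ * y ^ 2)
      = y * rexp (-(2*(v:ℝ))⁻¹ * y ^ 2) + μ * rexp (-(2*(v:ℝ))⁻¹ * y ^ 2) := fun y => by ring
  simp_rw [hsplit]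
  rw [integral_add h1' h2', gauss_int1 hb, integral_const_mul, integral_gaussian,
    sqrt_two_pi_v hv]
  have h2 : (0:ℝ) < √(2 * π * v) := by positivity
  field_simp
  ring

end KyleAux

open MeasureTheory ProbabilityTheory

/-- Informed trader's equilibrium expected profit in the Kyle model with
Gaussian privacy noise. -/
theorem stmt_4 {Ω : Type*} [MeasurableSpace Ω] (P : Measure Ω) [IsProbabilityMeasure P]
    (v u ε : Ω → ℝ) (p₀ σv σu σε : ℝ) (hv : 0 < σv) (hu : 0 < σu) (he : 0 ≤ σε)
    (hvd : P.map v = gaussianReal p₀ ⟨σv ^ 2, by positivity⟩)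
    (hud : P.map u = gaussianReal 0 ⟨σu ^ 2, by positivity⟩)
    (hed : P.map ε = gaussianReal 0 ⟨σε ^ 2, by positivity⟩)
    (hindep : iIndepFun ![v, u, ε] P)
    (β lam : ℝ)
    (hβ : β = Real.sqrt (σu ^ 2 + σε ^ 2) / σv)
    (hlam : lam = σv / (2 * Real.sqrt (σu ^ 2 + σε ^ 2)))
    (x p : Ω → ℝ)
    (hx : ∀ ω, x ω = β * (v ω - p₀))
    (hp : ∀ ω, p ω = p₀ + lam * (x ω + u ω + ε ω)) :
    ∫ ω, (v ω - p ω) * x ω ∂P = (1 / 2) * σv * Real.sqrt (σu ^ 2 + σε ^ 2) := by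
  have hs : 0 < Real.sqrt (σu ^ 2 + σε ^ 2) := Real.sqrt_pos.mpr (by positivity)
  -- AE measurability
  have hvm : AEMeasurable v P := aemeasurable_of_map_neZero (by rw [hvd]; exact (inferInstance : NeZero (gaussianReal p₀ _)))
  have hum : AEMeasurable u P := aemeasurable_of_map_neZero (by rw [hud]; exact (inferInstance : NeZero (gaussianReal 0 _)))
  have hεm : AEMeasurable ε P := aemeasurable_of_map_neZero (by rw [hed]; exact (inferInstance : NeZero (gaussianReal 0 _)))
  set W : Ω → ℝ := fun ω => v ω - p₀ with hWdef
  have hWm : AEMeasurable W P := hvm.sub aemeasurable_const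
  have hWd : P.map W = gaussianReal 0 ⟨σv ^ 2, by positivity⟩ := by
    have h1 : W = (fun t : ℝ => t + (-p₀)) ∘ v := by
      funext ω; simp [hWdef, sub_eq_add_neg]
    rw [h1, ← AEMeasurable.map_map_of_aemeasurable
      (measurable_id'.add_const (-p₀)).aemeasurable hvm, hvd]
    exact (gaussianReal_map_add_const (-p₀)).trans (by rw [add_neg_cancel])
  -- integrability and first moments
  have iW : Integrable W P := by
    have := (integrable_map_measure aestronglyMeasurable_id hWm).mp
      (by rw [hWd]; exact integrable_id_gaussianReal 0 _)
    exact this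
  have iu : Integrable u P := by
    have := (integrable_map_measure aestronglyMeasurable_id hum).mp
      (by rw [hud]; exact integrable_id_gaussianReal 0 _)
    exact this
  have iε : Integrable ε P := by
    have := (integrable_map_measure aestronglyMeasurable_id hεm).mp
      (by rw [hed]; exact integrable_id_gaussianReal 0 _)
    exact this
  have EW : ∫ ω, W ω ∂P = 0 := by
    have h1 : ∫ t, (t : ℝ) ∂(P.map W) = ∫ ω, W ω ∂P := integral_map hWm aestronglyMeasurable_id
    rw [← h1, hWd]
    exact integral_id_gaussianReal 0 _
  have Eu : ∫ ω, u ω ∂P = 0 := by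
    have h1 : ∫ t, (t : ℝ) ∂(P.map u) = ∫ ω, u ω ∂P := integral_map hum aestronglyMeasurable_id
    rw [← h1, hud]
    exact integral_id_gaussianReal 0 _
  have Eε : ∫ ω, ε ω ∂P = 0 := by
    have h1 : ∫ t, (t : ℝ) ∂(P.map ε) = ∫ ω, ε ω ∂P := integral_map hεm aestronglyMeasurable_id
    rw [← h1, hed]
    exact integral_id_gaussianReal 0 _
  -- second moment of W
  have hsqm : AEStronglyMeasurable (fun t : ℝ => t ^ 2) (P.map W) :=
    ((continuous_pow 2).measurable).aestronglyMeasurable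
  have iW2 : Integrable (fun ω => W ω ^ 2) P := by
    have := (integrable_map_measure hsqm hWm).mp
      (by rw [hWd]; simpa using integrable_sq_gaussianReal 0 _)
    exact this
  have EW2 : ∫ ω, W ω ^ 2 ∂P = σv ^ 2 := by
    have h1 : ∫ t, t ^ 2 ∂(P.map W) = ∫ ω, W ω ^ 2 ∂P := integral_map hWm hsqm
    rw [← h1, hWd]
    have := integral_sq_gaussianReal 0 ⟨σv ^ 2, by positivity⟩
    simp only [sub_zero] at this
    exact this
  -- independence
  have hvu : IndepFun v u P := by
    have := hindep.indepFun (i := 0) (j := 1) (by decide)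
    simpa using this
  have hvε : IndepFun v ε P := by
    have := hindep.indepFun (i := 0) (j := 2) (by decide)
    simpa using this
  have hWu : IndepFun W u P := by
    have := hvu.comp (φ := fun t : ℝ => t - p₀) (ψ := id)
      (measurable_id.sub_const p₀) measurable_id
    exact this
  have hWε : IndepFun W ε P := by
    have := hvε.comp (φ := fun t : ℝ => t - p₀) (ψ := id)
      (measurable_id.sub_const p₀) measurable_id
    exact this
  have iWu : Integrable (fun ω => W ω * u ω) P := hWu.integrable_mul iW iu
  have iWε : Integrable (fun ω => W ω * ε ω) P := hWε.integrable_mul iW iε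
  have EWu : ∫ ω, W ω * u ω ∂P = 0 := by
    rw [hWu.integral_fun_mul_eq_mul_integral iW.1 iu.1, EW, zero_mul]
  have EWε : ∫ ω, W ω * ε ω ∂P = 0 := by
    rw [hWε.integral_fun_mul_eq_mul_integral iW.1 iε.1, EW, zero_mul]
  -- rewrite the integrand
  have hfun : ∀ ω, (v ω - p ω) * x ω
      = (β - lam * β ^ 2) * W ω ^ 2 + (-(lam * β)) * (W ω * u ω) + (-(lam * β)) * (W ω * ε ω) := by
    intro ω
    rw [hp ω, hx ω]
    simp only [hWdef]
    ring
  calc ∫ ω, (v ω - p ω) * x ω ∂P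
      = ∫ ω, ((β - lam * β ^ 2) * W ω ^ 2 + (-(lam * β)) * (W ω * u ω)
          + (-(lam * β)) * (W ω * ε ω)) ∂P := by
        exact integral_congr_ae (Filter.Eventually.of_forall hfun)
    _ = (β - lam * β ^ 2) * σv ^ 2 := by
        have i1 : Integrable (fun ω => (β - lam * β ^ 2) * W ω ^ 2) P :=
          iW2.const_mul _
        have i2 : Integrable (fun ω => (-(lam * β)) * (W ω * u ω)) P := iWu.const_mul _
        have i3 : Integrable (fun ω => (-(lam * β)) * (W ω * ε ω)) P := iWε.const_mul _
        have i12 : Integrable (fun ω => (β - lam * β ^ 2) * W ω ^ 2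
            + (-(lam * β)) * (W ω * u ω)) P := i1.add i2
        rw [integral_add i12 i3, integral_add i1 i2,
          integral_const_mul, integral_const_mul, integral_const_mul, EW2, EWu, EWε]
        ring
    _ = (1 / 2) * σv * Real.sqrt (σu ^ 2 + σε ^ 2) := by
        have hsq : Real.sqrt (σu ^ 2 + σε ^ 2) ^ 2 = σu ^ 2 + σε ^ 2 :=
          Real.sq_sqrt (by positivity)
        rw [hβ, hlam]
        field_simp
        linear_combination 0 * hsq
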